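/- Let L > 0 be such that ∇E is L-Lipschitz with respect to the Frobenius norm, and let ρ ∈ (0,1]. Let T ≥ 1 and let U_0, …, U_T ∈ Σ and S_0, …, S_{T−1} ∈ Σ be such that for every k with 0 ≤ k ≤ T−1: D_k := S_k − U_k ≠ 0; g_k := −⟨∇E(U_k), D_k⟩ ≥ 0; U_{k+1} = U_k + α_k·D_k for some α_k ∈ [0,1] with α_k ≥ ᾱ_k := min(1, g_k/(L‖D_k‖_F²)); and E(U_k) − E(U_{k+1}) ≥ ρ·ᾱ_k·g_k. Let E* := min_{U∈Σ} E(U) (which exists since E is continuous and Σ is compact). Then min_{0≤k≤T−1} g_k ≤ max( √(2n·L·(E(U_0) − E*)/(ρ·T)), 2(E(U_0) − E*)/T ). -/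

import Mathlib

open Matrix

noncomputable section

/-- The unit simplex `Δ` in `ℝ^K`. -/
def unitSimplex (K : ℕ) : Set (Fin K → ℝ) :=
  {y | (∀ j, 0 ≤ y j) ∧ ∑ j, y j = 1}

/-- `Σ`: matrices in `ℝ^{n×K}` each of whose rows lies in the unit simplex. -/
def SigmaSet (n K : ℕ) : Set (Matrix (Fin n) (Fin K) ℝ) :=
  {U | ∀ i, U i ∈ unitSimplex K}

/-- `Σ̄`: binary matrices in `Σ`. -/
def SigmaBar (n K : ℕ) : Set (Matrix (Fin n) (Fin K) ℝ) :=
  {U | U ∈ SigmaSet n K ∧ ∀ i j, U i j = 0 ∨ U i j = 1}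

/-- Frobenius inner product `⟨A,B⟩ = trace(AᵀB)`. -/
def frobInner {n K : ℕ} (A B : Matrix (Fin n) (Fin K) ℝ) : ℝ :=
  Matrix.trace (Aᵀ * B)

/-- Frobenius norm. -/
def frobNorm {n K : ℕ} (A : Matrix (Fin n) (Fin K) ℝ) : ℝ :=
  Real.sqrt (∑ i, ∑ j, (A i j) ^ 2)

/-- The energy
`E(U) = (1/2)·trace(Uᵀ Lₛ U) + (1/ε)·Σᵢ uᵢᵀ(𝟙 − uᵢ) + (1/2)·Σᵢ ωᵢ‖ûᵢ − uᵢ‖²`. -/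
def En {n K : ℕ} (Ls : Matrix (Fin n) (Fin n) ℝ) (ω : Fin n → ℝ)
    (Uhat : Matrix (Fin n) (Fin K) ℝ) (ε : ℝ) (U : Matrix (Fin n) (Fin K) ℝ) : ℝ :=
  (1 / 2) * Matrix.trace (Uᵀ * Ls * U)
    + (1 / ε) * ∑ i, ∑ j, U i j * (1 - U i j)
    + (1 / 2) * ∑ i, ω i * ∑ j, (Uhat i j - U i j) ^ 2

/-- The gradient `∇E(U) = Lₛ U + (1/ε)(J − 2U) − D_ω(Û − U)` (`J` the all-ones matrix). -/
def gradE {n K : ℕ} (Ls : Matrix (Fin n) (Fin n) ℝ) (ω : Fin n → ℝ)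
    (Uhat : Matrix (Fin n) (Fin K) ℝ) (ε : ℝ) (U : Matrix (Fin n) (Fin K) ℝ) :
    Matrix (Fin n) (Fin K) ℝ :=
  Ls * U + (1 / ε) • (Matrix.of (fun _ _ => (1 : ℝ)) - 2 • U)
    - Matrix.diagonal ω * (Uhat - U)



/-! ### Auxiliary lemmas -/

lemma frobInner_eq_sum {n K : ℕ} (A B : Matrix (Fin n) (Fin K) ℝ) :
    frobInner A B = ∑ i, ∑ j, A i j * B i j := by
  simp only [frobInner, Matrix.trace, Matrix.mul_apply, Matrix.diag, Matrix.transpose_apply]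
  rw [Finset.sum_comm]

lemma frobNorm_nonneg' {n K : ℕ} (A : Matrix (Fin n) (Fin K) ℝ) : 0 ≤ frobNorm A :=
  Real.sqrt_nonneg _

lemma frobNorm_sq {n K : ℕ} (A : Matrix (Fin n) (Fin K) ℝ) :
    frobNorm A ^ 2 = ∑ i, ∑ j, (A i j) ^ 2 := by
  rw [frobNorm, Real.sq_sqrt]
  positivity

lemma frobInner_le {n K : ℕ} (A B : Matrix (Fin n) (Fin K) ℝ) :
    frobInner A B ≤ frobNorm A * frobNorm B := by
  rw [frobInner_eq_sum, frobNorm, frobNorm]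
  rw [← Fintype.sum_prod_type (f := fun p : Fin n × Fin K => A p.1 p.2 * B p.1 p.2),
      ← Fintype.sum_prod_type (f := fun p : Fin n × Fin K => (A p.1 p.2)^2),
      ← Fintype.sum_prod_type (f := fun p : Fin n × Fin K => (B p.1 p.2)^2)]
  have h := Finset.sum_mul_sq_le_sq_mul_sq Finset.univ
    (fun p : Fin n × Fin K => A p.1 p.2) (fun p => B p.1 p.2)
  calc ∑ p : Fin n × Fin K, A p.1 p.2 * B p.1 p.2
      ≤ |∑ p : Fin n × Fin K, A p.1 p.2 * B p.1 p.2| := le_abs_self _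
    _ = Real.sqrt ((∑ p : Fin n × Fin K, A p.1 p.2 * B p.1 p.2)^2) :=
        (Real.sqrt_sq_eq_abs _).symm
    _ ≤ Real.sqrt ((∑ p : Fin n × Fin K, (A p.1 p.2)^2) * (∑ p : Fin n × Fin K, (B p.1 p.2)^2)) :=
        Real.sqrt_le_sqrt h
    _ = _ := Real.sqrt_mul (by positivity) _

lemma frobNorm_pos {n K : ℕ} (A : Matrix (Fin n) (Fin K) ℝ) (hA : A ≠ 0) : 0 < frobNorm A := by
  rw [frobNorm]
  apply Real.sqrt_pos.mpr
  by_contra h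
  push_neg at h
  have hz : ∑ i, ∑ j, (A i j)^2 = 0 :=
    le_antisymm h (Finset.sum_nonneg fun i _ => Finset.sum_nonneg fun j _ => sq_nonneg _)
  apply hA
  ext i j
  have h1 := (Finset.sum_eq_zero_iff_of_nonneg
    (fun i _ => Finset.sum_nonneg fun j _ => sq_nonneg (A i j))).mp hz i (Finset.mem_univ i)
  have h2 := (Finset.sum_eq_zero_iff_of_nonneg
    (fun j _ => sq_nonneg (A i j))).mp h1 j (Finset.mem_univ j)
  simpa using pow_eq_zero_iff (n := 2) (by norm_num) |>.mp h2

section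
variable {n K : ℕ} (Ls : Matrix (Fin n) (Fin n) ℝ) (ω : Fin n → ℝ)
    (Uhat : Matrix (Fin n) (Fin K) ℝ) (ε : ℝ)

lemma grad_inner (U D : Matrix (Fin n) (Fin K) ℝ) :
    frobInner (gradE Ls ω Uhat ε U) D
      = frobInner (Ls * U) D
        + (1/ε) * ((∑ i, ∑ j, D i j) - 2 * ∑ i, ∑ j, U i j * D i j)
        - ∑ i, ω i * ∑ j, (Uhat i j - U i j) * D i j := by
  simp only [frobInner_eq_sum, gradE, Matrix.add_apply, Matrix.sub_apply, Matrix.smul_apply,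
    Matrix.of_apply, Matrix.diagonal_mul, Matrix.smul_apply, smul_eq_mul]
  calc ∑ i, ∑ j, ((Ls * U) i j + 1 / ε * (1 - 2 • U i j) - ω i * (Uhat i j - U i j)) * D i j
      = ∑ i, ∑ j, ((Ls*U) i j * D i j + (1/ε)*(D i j) - (1/ε)*(2*(U i j * D i j))
          - ω i * ((Uhat i j - U i j)*D i j)) :=
        Finset.sum_congr rfl fun i _ => Finset.sum_congr rfl fun j _ => by
          simp only [nsmul_eq_mul]; push_cast; ring
    _ = _ := by
        simp only [Finset.sum_add_distrib, Finset.sum_sub_distrib, ← Finset.mul_sum]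
        ring

lemma frobInner_comm (A B : Matrix (Fin n) (Fin K) ℝ) : frobInner A B = frobInner B A := by
  simp only [frobInner_eq_sum]
  exact Finset.sum_congr rfl fun i _ => Finset.sum_congr rfl fun j _ => mul_comm _ _

lemma frob_swap (hsym : Lsᵀ = Ls) (A B : Matrix (Fin n) (Fin K) ℝ) :
    frobInner A (Ls * B) = frobInner B (Ls * A) := by
  unfold frobInner
  rw [← Matrix.trace_transpose (Aᵀ * (Ls * B)), Matrix.transpose_mul, Matrix.transpose_transpose,
      Matrix.transpose_mul, Matrix.mul_assoc, hsym]

lemma diff_inner (U D : Matrix (Fin n) (Fin K) ℝ) :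
    frobInner (gradE Ls ω Uhat ε (U + D) - gradE Ls ω Uhat ε U) D
      = frobInner (Ls * D) D - (2/ε) * (∑ i, ∑ j, (D i j)^2) + ∑ i, ω i * ∑ j, (D i j)^2 := by
  simp only [frobInner_eq_sum, gradE, Matrix.mul_add]
  simp only [Matrix.sub_apply, Matrix.add_apply, Matrix.smul_apply, Matrix.of_apply,
    Matrix.diagonal_mul, smul_eq_mul, nsmul_eq_mul]
  calc ∑ i, ∑ j, ((Ls*U) i j + (Ls*D) i j + 1/ε * (1 - (2:ℕ) * (U i j + D i j))
          - ω i * (Uhat i j - (U i j + D i j))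
          - ((Ls*U) i j + 1/ε * (1 - (2:ℕ) * U i j) - ω i * (Uhat i j - U i j))) * D i j
      = ∑ i, ∑ j, ((Ls*D) i j * D i j - (2/ε) * (D i j)^2 + ω i * (D i j)^2) :=
        Finset.sum_congr rfl fun i _ => Finset.sum_congr rfl fun j _ => by push_cast; ring
    _ = _ := by
        simp only [Finset.sum_add_distrib, Finset.sum_sub_distrib, ← Finset.mul_sum]

lemma En_add (hsym : Lsᵀ = Ls) (U D : Matrix (Fin n) (Fin K) ℝ) :
    En Ls ω Uhat ε (U + D)
      = En Ls ω Uhat ε U + frobInner (Ls * U) D + (1/2) * frobInner (Ls * D) D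
        + (1/ε) * ((∑ i, ∑ j, D i j) - 2 * (∑ i, ∑ j, U i j * D i j) - ∑ i, ∑ j, (D i j)^2)
        - ∑ i, ω i * ∑ j, (Uhat i j - U i j) * D i j
        + (1/2) * ∑ i, ω i * ∑ j, (D i j)^2 := by
  have e1 : ∀ X Y : Matrix (Fin n) (Fin K) ℝ,
      Matrix.trace (Xᵀ * Ls * Y) = frobInner X (Ls * Y) := fun X Y => by
    rw [Matrix.mul_assoc]; rfl
  have h1 : Matrix.trace ((U+D)ᵀ * Ls * (U+D))
      = Matrix.trace (Uᵀ * Ls * U) + 2 * frobInner (Ls * U) D + frobInner (Ls * D) D := by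
    rw [Matrix.transpose_add, Matrix.add_mul, Matrix.add_mul, Matrix.mul_add, Matrix.mul_add,
      Matrix.trace_add, Matrix.trace_add, Matrix.trace_add, e1, e1, e1, e1,
      frob_swap Ls hsym U D, frobInner_comm D (Ls * U), frobInner_comm D (Ls * D)]
    ring
  have h2 : ∑ i, ∑ j, (U+D) i j * (1 - (U+D) i j)
      = (∑ i, ∑ j, U i j * (1 - U i j))
        + ((∑ i, ∑ j, D i j) - 2 * (∑ i, ∑ j, U i j * D i j) - ∑ i, ∑ j, (D i j)^2) := by
    simp only [Matrix.add_apply]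
    calc ∑ i, ∑ j, (U i j + D i j) * (1 - (U i j + D i j))
        = ∑ i, ∑ j, (U i j * (1 - U i j) + (D i j - 2 * (U i j * D i j) - (D i j)^2)) :=
          Finset.sum_congr rfl fun i _ => Finset.sum_congr rfl fun j _ => by ring
      _ = _ := by
          simp only [Finset.sum_add_distrib, Finset.sum_sub_distrib, ← Finset.mul_sum]
  have h3 : ∑ i, ω i * ∑ j, (Uhat i j - (U+D) i j)^2
      = (∑ i, ω i * ∑ j, (Uhat i j - U i j)^2)
        - 2 * (∑ i, ω i * ∑ j, (Uhat i j - U i j) * D i j)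
        + ∑ i, ω i * ∑ j, (D i j)^2 := by
    simp only [Matrix.add_apply]
    calc ∑ i, ω i * ∑ j, (Uhat i j - (U i j + D i j))^2
        = ∑ i, (ω i * ∑ j, (Uhat i j - U i j)^2
            - 2 * (ω i * ∑ j, (Uhat i j - U i j) * D i j) + ω i * ∑ j, (D i j)^2) :=
          Finset.sum_congr rfl fun i _ => by
            rw [show ∑ j, (Uhat i j - (U i j + D i j))^2
                = ∑ j, ((Uhat i j - U i j)^2 - 2 * ((Uhat i j - U i j) * D i j) + (D i j)^2) from
              Finset.sum_congr rfl fun j _ => by ring]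
            simp only [Finset.sum_add_distrib, Finset.sum_sub_distrib, ← Finset.mul_sum]
            ring
      _ = _ := by
          simp only [Finset.sum_add_distrib, Finset.sum_sub_distrib, ← Finset.mul_sum]
  rw [En, En, h1, h2, h3]
  ring

lemma En_taylor (hsym : Lsᵀ = Ls) (U D : Matrix (Fin n) (Fin K) ℝ) :
    En Ls ω Uhat ε (U + D)
      = En Ls ω Uhat ε U + frobInner (gradE Ls ω Uhat ε U) D
        + (1/2) * frobInner (gradE Ls ω Uhat ε (U + D) - gradE Ls ω Uhat ε U) D := by
  rw [En_add Ls ω Uhat ε hsym U D, grad_inner, diff_inner]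
  ring

end

lemma frobNorm_sq_le_two_n {n K : ℕ} (A B : Matrix (Fin n) (Fin K) ℝ)
    (hA : A ∈ SigmaSet n K) (hB : B ∈ SigmaSet n K) :
    frobNorm (A - B) ^ 2 ≤ 2 * n := by
  rw [frobNorm_sq]
  have hrow : ∀ i, ∑ j, ((A - B) i j)^2 ≤ 2 := by
    intro i
    obtain ⟨hApos, hAsum⟩ := hA i
    obtain ⟨hBpos, hBsum⟩ := hB i
    have hb : ∀ j ∈ Finset.univ, ((A - B) i j)^2 ≤ A i j + B i j := by
      intro j _
      have h1 : A i j ≤ 1 := by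
        rw [← hAsum]
        exact Finset.single_le_sum (fun j _ => hApos j) (Finset.mem_univ j)
      have h2 : B i j ≤ 1 := by
        rw [← hBsum]
        exact Finset.single_le_sum (fun j _ => hBpos j) (Finset.mem_univ j)
      have h3 := hApos j
      have h4 := hBpos j
      simp only [Matrix.sub_apply]
      nlinarith [mul_nonneg h3 h4]
    calc ∑ j, ((A - B) i j)^2 ≤ ∑ j, (A i j + B i j) := Finset.sum_le_sum hb
      _ = 2 := by rw [Finset.sum_add_distrib, hAsum, hBsum]; norm_num
  calc ∑ i, ∑ j, ((A - B) i j)^2 ≤ ∑ _i : Fin n, (2:ℝ) :=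
        Finset.sum_le_sum (fun i _ => hrow i)
    _ = 2 * n := by simp [Finset.sum_const, mul_comm]

/-- convergence rate of the (greedy) Frank–Wolfe method applied to `E` over
`Σ`: the smallest FW gap after `T` iterations satisfies
`min_{k<T} g_k ≤ max(√(2n·L·(E(U₀) − E*)/(ρT)), 2(E(U₀) − E*)/T)`. -/
theorem gfw_convergence_rate (n K : ℕ) (hn : 1 ≤ n) (hK : 2 ≤ K)
    (Ls : Matrix (Fin n) (Fin n) ℝ) (hLs : Ls.PosSemidef)
    (ω : Fin n → ℝ) (hω : ∀ i, 0 ≤ ω i)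
    (Uhat : Matrix (Fin n) (Fin K) ℝ) (hUhat : Uhat ∈ SigmaSet n K)
    (ε : ℝ) (hε : 0 < ε)
    (L : ℝ) (hL : 0 < L)
    (hlip : ∀ Ubar U : Matrix (Fin n) (Fin K) ℝ,
      frobNorm (gradE Ls ω Uhat ε Ubar - gradE Ls ω Uhat ε U) ≤ L * frobNorm (Ubar - U))
    (ρ : ℝ) (hρ0 : 0 < ρ) (hρ1 : ρ ≤ 1)
    (T : ℕ) (hT : 1 ≤ T)
    (U S : ℕ → Matrix (Fin n) (Fin K) ℝ) (α : ℕ → ℝ) (g : ℕ → ℝ)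
    (hgdef : ∀ k, g k = -frobInner (gradE Ls ω Uhat ε (U k)) (S k - U k))
    (hUmem : ∀ k ≤ T, U k ∈ SigmaSet n K)
    (hSmem : ∀ k < T, S k ∈ SigmaSet n K)
    (hDne : ∀ k < T, S k - U k ≠ 0)
    (hgnonneg : ∀ k < T, 0 ≤ g k)
    (hα01 : ∀ k < T, α k ∈ Set.Icc (0 : ℝ) 1)
    (hαlb : ∀ k < T, min 1 (g k / (L * frobNorm (S k - U k) ^ 2)) ≤ α k)
    (hupd : ∀ k < T, U (k + 1) = U k + α k • (S k - U k))
    (hdec : ∀ k < T, ρ * min 1 (g k / (L * frobNorm (S k - U k) ^ 2)) * g k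
      ≤ En Ls ω Uhat ε (U k) - En Ls ω Uhat ε (U (k + 1)))
    (Estar : ℝ) (hEstar : IsLeast (En Ls ω Uhat ε '' SigmaSet n K) Estar) :
    (Finset.range T).inf' (Finset.nonempty_range_iff.mpr (by omega)) g
      ≤ max (Real.sqrt (2 * n * L * (En Ls ω Uhat ε (U 0) - Estar) / (ρ * T)))
          (2 * (En Ls ω Uhat ε (U 0) - Estar) / T) := by
  have hsym : Lsᵀ = Ls := by
    simpa [Matrix.IsHermitian, Matrix.conjTranspose_eq_transpose_of_trivial] using hLs.1
  have hne : (Finset.range T).Nonempty := Finset.nonempty_range_iff.mpr (by omega)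
  suffices h : (Finset.range T).inf' hne g
      ≤ max (Real.sqrt (2 * n * L * (En Ls ω Uhat ε (U 0) - Estar) / (ρ * T)))
          (2 * (En Ls ω Uhat ε (U 0) - Estar) / T) by exact h
  set M := (Finset.range T).inf' hne g with hMdef
  have hMle : ∀ k, k < T → M ≤ g k := fun k hk =>
    Finset.inf'_le g (Finset.mem_range.mpr hk)
  have hMnn : 0 ≤ M := by
    obtain ⟨k₀, hk₀, hEq⟩ := Finset.exists_mem_eq_inf' hne g
    rw [hMdef, hEq]
    exact hgnonneg k₀ (Finset.mem_range.mp hk₀)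
  have hnpos : (0:ℝ) < n := by exact_mod_cast (by omega : 0 < n)
  have hTpos : (0:ℝ) < T := by exact_mod_cast (by omega : 0 < T)
  set c := min (ρ * M^2 / (2 * n * L)) (M / 2) with hcdef
  -- per-step decrease
  have hstep : ∀ k, k < T → c ≤ En Ls ω Uhat ε (U k) - En Ls ω Uhat ε (U (k+1)) := by
    intro k hk
    set D := S k - U k with hDdef
    set d := frobNorm D with hddef
    have hdpos : 0 < d := frobNorm_pos D (hDne k hk)
    have hd2 : d^2 ≤ 2 * n := frobNorm_sq_le_two_n (S k) (U k) (hSmem k hk) (hUmem k hk.le)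
    have hLd : (0:ℝ) < L * d^2 := by positivity
    rcases le_or_gt (g k / (L * d^2)) 1 with hcase | hcase
    · have hdk := hdec k hk
      rw [min_eq_right hcase] at hdk
      have hgM : M ≤ g k := hMle k hk
      have h1 : ρ * M^2 ≤ ρ * (g k)^2 :=
        mul_le_mul_of_nonneg_left (pow_le_pow_left₀ hMnn hgM 2) hρ0.le
      have h2 : L * d^2 ≤ 2 * n * L := by nlinarith
      have h3 : ρ * M^2 / (2 * n * L) ≤ ρ * (g k / (L * d^2)) * g k := by
        calc ρ * M^2 / (2 * n * L) ≤ ρ * (g k)^2 / (L * d^2) :=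
              div_le_div₀ (by positivity) h1 hLd h2
          _ = ρ * (g k / (L * d^2)) * g k := by
              field_simp
      exact le_trans (min_le_left _ _) (le_trans h3 hdk)
    · have hmin1 : min 1 (g k / (L * d^2)) = 1 := min_eq_left hcase.le
      have hα1 : α k = 1 := by
        have hlb := hαlb k hk
        rw [hmin1] at hlb
        exact le_antisymm (hα01 k hk).2 hlb
      have hU1 : U (k+1) = U k + D := by rw [hupd k hk, hα1, one_smul]
      have hgk2 : L * d^2 < g k := (one_lt_div hLd).mp hcase
      have htay := En_taylor Ls ω Uhat ε hsym (U k) D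
      have hginner : frobInner (gradE Ls ω Uhat ε (U k)) D = -g k := by
        rw [hgdef k]; ring
      have hlipb : frobInner (gradE Ls ω Uhat ε (U k + D) - gradE Ls ω Uhat ε (U k)) D
          ≤ L * d^2 := by
        calc frobInner (gradE Ls ω Uhat ε (U k + D) - gradE Ls ω Uhat ε (U k)) D
            ≤ frobNorm (gradE Ls ω Uhat ε (U k + D) - gradE Ls ω Uhat ε (U k)) * frobNorm D :=
              frobInner_le _ _
          _ ≤ (L * frobNorm (U k + D - U k)) * d :=
              mul_le_mul_of_nonneg_right (hlip _ _) (frobNorm_nonneg' _)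
          _ = L * d^2 := by rw [add_sub_cancel_left]; ring
      have hMg : M ≤ g k := hMle k hk
      rw [hU1]
      refine le_trans (min_le_right _ _) ?_
      rw [htay]
      linarith
  -- telescoping sum
  have hsum := Finset.card_nsmul_le_sum (Finset.range T)
    (fun k => En Ls ω Uhat ε (U k) - En Ls ω Uhat ε (U (k+1))) c
    (fun k hk => hstep k (Finset.mem_range.mp hk))
  rw [Finset.sum_range_sub' (fun k => En Ls ω Uhat ε (U k)) T, Finset.card_range,
    nsmul_eq_mul] at hsum
  have hUT : Estar ≤ En Ls ω Uhat ε (U T) := hEstar.2 ⟨U T, hUmem T le_rfl, rfl⟩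
  have hTc : (T:ℝ) * c ≤ En Ls ω Uhat ε (U 0) - Estar := by linarith
  rcases le_total (ρ * M^2 / (2 * n * L)) (M / 2) with hmin | hmin
  · rw [hcdef, min_eq_left hmin] at hTc
    have h2nL : (0:ℝ) < 2 * n * L := by positivity
    have hkey : ρ * T * M^2 ≤ 2 * n * L * (En Ls ω Uhat ε (U 0) - Estar) := by
      have h4 := mul_le_mul_of_nonneg_left hTc h2nL.le
      have h5 : 2 * n * L * ((T:ℝ) * (ρ * M^2 / (2 * n * L))) = ρ * T * M^2 := by
        field_simp
      linarith
    have hsq : M^2 ≤ 2 * n * L * (En Ls ω Uhat ε (U 0) - Estar) / (ρ * T) := by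
      rw [le_div_iff₀ (by positivity)]
      linarith
    refine le_trans ?_ (le_max_left _ _)
    calc M = Real.sqrt (M^2) := (Real.sqrt_sq hMnn).symm
      _ ≤ Real.sqrt (2 * n * L * (En Ls ω Uhat ε (U 0) - Estar) / (ρ * T)) :=
          Real.sqrt_le_sqrt hsq
  · rw [hcdef, min_eq_right hmin] at hTc
    refine le_trans ?_ (le_max_right _ _)
    rw [le_div_iff₀ hTpos]
    linarith
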